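/- For any polytope P ⊆ R^n with at least two distinct vertices, λ(P) ≤ 1/2, where λ(P) = sup{λ : P = (1-λ)P + λV(P)}. -/

import Mathlib

open Set Pointwise Metric

/-- A polytope is the convex hull of finitely many points. -/
def IsPolytope {n : ℕ} (P : Set (EuclideanSpace ℝ (Fin n))) : Prop :=
  ∃ S : Finset (EuclideanSpace ℝ (Fin n)), P = convexHull ℝ (S : Set (EuclideanSpace ℝ (Fin n)))

/-- The vertex-generation parameter of a polytope. -/
noncomputable def lambdaParam {n : ℕ} (P : Set (EuclideanSpace ℝ (Fin n))) : ℝ :=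
  sSup {l : ℝ | l ∈ Set.Icc (0:ℝ) 1 ∧ P = (1 - l) • P + l • (P.extremePoints ℝ)}

theorem stmt_2 {n : ℕ} (P : Set (EuclideanSpace ℝ (Fin n))) (hP : IsPolytope P)
    (h2 : ∃ v w, v ∈ P.extremePoints ℝ ∧ w ∈ P.extremePoints ℝ ∧ v ≠ w) :
    lambdaParam P ≤ 1 / 2 := by
  classical
  obtain ⟨v, w, hv, hw, hvw⟩ := h2
  obtain ⟨S, hS⟩ := hP
  have hPconv : Convex ℝ P := hS ▸ convex_convexHull ℝ _
  have hPcomp : IsCompact P := hS ▸ S.finite_toSet.isCompact_convexHull ℝ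
  set V := P.extremePoints ℝ with hVdef
  have hVsub : V ⊆ P := extremePoints_subset
  have hVfin : V.Finite := S.finite_toSet.subset (by
    rw [hVdef, hS]; exact extremePoints_convexHull_subset)
  have hPV : P = convexHull ℝ V := by
    have h1 := closure_convexHull_extremePoints hPcomp hPconv
    rw [(hVfin.isCompact_convexHull ℝ).isClosed.closure_eq] at h1
    exact h1.symm
  unfold lambdaParam
  apply Real.sSup_le _ (by norm_num)
  rintro l ⟨⟨hl0, hl1⟩, heq⟩
  by_contra hcon
  push_neg at hcon
  rcases lt_or_eq_of_le hl1 with h1 | h1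
  · -- case l < 1
    have h1l : (0:ℝ) < 1 - l := by linarith
    set F := hVfin.toFinset with hF
    have hvF : v ∈ F := hVfin.mem_toFinset.mpr hv
    have hwF : w ∈ F := hVfin.mem_toFinset.mpr hw
    obtain ⟨ab, habmem, habmax⟩ := Finset.exists_max_image (F ×ˢ F)
      (fun p => dist p.1 p.2) ⟨(v, w), Finset.mem_product.mpr ⟨hvF, hwF⟩⟩
    obtain ⟨a, b⟩ := ab
    have haF : a ∈ F := (Finset.mem_product.mp habmem).1
    have hbF : b ∈ F := (Finset.mem_product.mp habmem).2
    have haV : a ∈ V := hVfin.mem_toFinset.mp haF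
    have hbV : b ∈ V := hVfin.mem_toFinset.mp hbF
    have hD : ∀ x ∈ F, ∀ y ∈ F, dist x y ≤ dist a b := by
      intro x hx y hy
      exact habmax (x, y) (Finset.mem_product.mpr ⟨hx, hy⟩)
    have hab : a ≠ b := by
      intro h
      have h2 := hD v hvF w hwF
      rw [h, dist_self] at h2
      exact hvw (dist_le_zero.mp h2)
    set c := a - b with hc
    set g : EuclideanSpace ℝ (Fin n) → ℝ := fun x => @inner ℝ _ _ x c with hg
    set M := g a with hM
    have hgap : ∀ u ∈ V, u ≠ a → g u < M := by
      intro u hu hua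
      have h1 : ‖b - u‖ ≤ ‖a - b‖ := by
        have h2 := hD b hbF u (hVfin.mem_toFinset.mpr hu)
        rwa [dist_eq_norm, dist_eq_norm] at h2
      have h2 : (0:ℝ) < ‖a - u‖ := by
        rw [norm_pos_iff]
        exact sub_ne_zero.mpr (Ne.symm hua)
      have key : M - g u = @inner ℝ _ _ (a - u) c := by
        simp [hg, hM, inner_sub_left]
      have hpol : ‖(a - u) - (a - b)‖^2
          = ‖a - u‖^2 - 2 * @inner ℝ _ _ (a - u) (a - b) + ‖a - b‖^2 :=
        norm_sub_sq_real _ _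
      have hsimp : (a - u) - (a - b) = b - u := by abel
      rw [hsimp] at hpol
      have : (0:ℝ) < @inner ℝ _ _ (a - u) c := by
        rw [hc]; nlinarith [norm_nonneg (b - u), norm_nonneg (a - b)]
      linarith [key ▸ this]
    have hglinmap : IsLinearMap ℝ g := by
      constructor
      · intro x y; exact inner_add_left x y c
      · intro r x; exact real_inner_smul_left x c r
    have hgP : ∀ x ∈ P, g x ≤ M := by
      have hsub : P ⊆ {y | g y ≤ M} := by
        rw [hPV]
        apply convexHull_min _ (convex_halfSpace_le hglinmap M)
        intro u hu
        by_cases hua : u = a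
        · simp [hua]; exact hM.symm.le
        · exact le_of_lt (hgap u hu hua)
      exact fun x hx => hsub hx
    -- second maximum
    have hVane : (F.erase a).Nonempty := by
      rcases ne_or_eq v a with h | h
      · exact ⟨v, Finset.mem_erase.mpr ⟨h, hvF⟩⟩
      · exact ⟨w, Finset.mem_erase.mpr ⟨by rw [← h]; exact hvw.symm, hwF⟩⟩
    obtain ⟨q, hqmem, hqmax⟩ := Finset.exists_max_image (F.erase a) g hVane
    have hqa : q ≠ a := (Finset.mem_erase.mp hqmem).1
    have hqV : q ∈ V := hVfin.mem_toFinset.mp (Finset.mem_erase.mp hqmem).2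
    set M' := g q with hM'def
    have hM' : M' < M := hgap q hqV hqa
    have hsecond : ∀ u ∈ V, u ≠ a → g u ≤ M' := fun u hu hua =>
      hqmax u (Finset.mem_erase.mpr ⟨hua, hVfin.mem_toFinset.mpr hu⟩)
    -- the midpoint of a and q
    have hx₀P : (1/2:ℝ) • a + (1/2:ℝ) • q ∈ P :=
      hPconv (hVsub haV) (hVsub hqV) (by norm_num) (by norm_num) (by norm_num)
    have hx₀mem : (1/2:ℝ) • a + (1/2:ℝ) • q ∈ (1 - l) • P + l • V := heq ▸ hx₀P
    obtain ⟨p', hp', u', hu', hsum⟩ := Set.mem_add.mp hx₀mem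
    obtain ⟨p, hpP, rfl⟩ := hp'
    obtain ⟨u, huV, rfl⟩ := hu'
    -- hsum : (1-l) • p + l • u = (1/2) • a + (1/2) • q
    have hgsum : (1 - l) * g p + l * g u = (1/2) * M + (1/2) * M' := by
      have h2 := congrArg g hsum
      simp only [hg, inner_add_left, real_inner_smul_left] at h2
      rw [hM, hM'def, hg]
      linarith [h2]
    have hua : u = a := by
      by_contra h
      have h1 : g u ≤ M' := hsecond u huV h
      have h2 : g p ≤ M := hgP p hpP
      nlinarith [mul_le_mul_of_nonneg_left h2 (le_of_lt h1l),
        mul_le_mul_of_nonneg_left h1 hl0]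
    rw [hua] at hsum
    have hkey : q = (2*l - 1) • a + (2 - 2*l) • p := by
      have h2 : ((1:ℝ) - l) • p + l • a = (1/2:ℝ) • a + (1/2:ℝ) • q := hsum
      linear_combination (norm := module) (-2:ℝ) • h2
    have hθ : q ∈ openSegment ℝ a p :=
      ⟨2*l - 1, 2 - 2*l, by linarith, by linarith, by ring, hkey.symm⟩
    have hext := (mem_extremePoints.mp hqV).2 a (hVsub haV) p hpP hθ
    exact hqa hext.1.symm
  · -- case l = 1
    subst h1
    have hPne : P.Nonempty := ⟨v, hv.1⟩
    have hPeqV : P = V := by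
      rw [heq]
      simp [Set.zero_smul_set hPne, one_smul]
      exact hVdef.symm
    have hmP : (1/2:ℝ) • v + (1/2:ℝ) • w ∈ P :=
      hPconv hv.1 hw.1 (by norm_num) (by norm_num) (by norm_num)
    have hmV : (1/2:ℝ) • v + (1/2:ℝ) • w ∈ V := hPeqV ▸ hmP
    have hext := (mem_extremePoints.mp hmV).2 v hv.1 w hw.1
      ⟨1/2, 1/2, by norm_num, by norm_num, by norm_num, rfl⟩
    exact hvw (hext.1.trans hext.2.symm)
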